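/- For real α < 1 and n = 0, the double integral ∬_{[0,1]²} x^{-α} y^{-α} / (1-x(1-y)) dx dy equals 2·Z₂⁻(α) = 2·Σ_{ν≥1} (-1)^{ν-1}/(ν-α)². -/

import Mathlib

open MeasureTheory Set Real

private lemma exp_neg_deriv : ∀ x ∈ Set.Ioi (0:ℝ),
    HasDerivWithinAt (fun t : ℝ => Real.exp (-t)) (-Real.exp (-x)) (Set.Ioi 0) x := fun x _ =>
  (mul_neg_one (Real.exp (-x)) ▸
    ((Real.hasDerivAt_exp (-x)).comp x (hasDerivAt_neg x))).hasDerivWithinAt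

private lemma exp_neg_image : (fun t : ℝ => Real.exp (-t)) '' Set.Ioi 0 = Set.Ioo 0 1 := by
  ext u
  constructor
  · rintro ⟨t, ht, rfl⟩
    exact ⟨Real.exp_pos _, by
      rw [← Real.exp_zero]
      exact Real.exp_lt_exp.2 (by simpa using ht.out)⟩
  · rintro ⟨h0, h1⟩
    exact ⟨-Real.log u, by simpa using Real.log_neg h0 h1, by simp [Real.exp_log h0]⟩

private lemma exp_neg_injOn : Set.InjOn (fun t : ℝ => Real.exp (-t)) (Set.Ioi 0) :=
  (Real.exp_injective.comp neg_injective).injOn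

private lemma integrableOn_texp {c : ℝ} (hc : 0 < c) :
    IntegrableOn (fun t : ℝ => t * Real.exp (-(c * t))) (Set.Ioi 0) := by
  have := integrableOn_rpow_mul_exp_neg_mul_rpow (s := 1) (p := 1) (b := c) (by norm_num)
    (by norm_num) hc
  simpa [Real.rpow_one, neg_mul] using this

private lemma aux_fun_eq {c : ℝ} (t : ℝ) :
    |(-Real.exp (-t))| • (Real.exp (-t) ^ (c - 1) * (-Real.log (Real.exp (-t))))
      = t * Real.exp (-(c * t)) := by
  rw [abs_neg, abs_of_pos (Real.exp_pos _), Real.log_exp, smul_eq_mul, neg_neg, ← Real.exp_mul,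
    show -(c*t) = -t + -t * (c-1) by ring, Real.exp_add]
  ring

private lemma key_log_integrable {c : ℝ} (hc : 0 < c) :
    IntegrableOn (fun u : ℝ => u ^ (c - 1) * (-Real.log u)) (Set.Ioo 0 1) := by
  rw [← exp_neg_image, integrableOn_image_iff_integrableOn_abs_deriv_smul measurableSet_Ioi
    exp_neg_deriv exp_neg_injOn]
  exact (integrableOn_texp hc).congr_fun (fun t _ => (aux_fun_eq t).symm) measurableSet_Ioi

private lemma key_log_integral {c : ℝ} (hc : 0 < c) :
    ∫ u in Set.Ioo (0:ℝ) 1, u ^ (c - 1) * (-Real.log u) = 1 / c ^ 2 := by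
  rw [← exp_neg_image, integral_image_eq_integral_abs_deriv_smul measurableSet_Ioi
    exp_neg_deriv exp_neg_injOn]
  simp_rw [aux_fun_eq]
  have h := Real.integral_rpow_mul_exp_neg_mul_Ioi (a := 2) (r := c) two_pos hc
  rw [show (2:ℝ) - 1 = 1 by norm_num] at h
  simp only [Real.rpow_one] at h
  rw [h, Real.Gamma_two, mul_one, show ((2:ℝ)) = ((2:ℕ):ℝ) by norm_num, Real.rpow_natCast]
  rw [div_pow, one_pow]

private lemma L1 {c : ℝ} (hc : 0 < c) :
    IntegrableOn (fun u : ℝ => u ^ (c - 1)) (Set.Ioo (0:ℝ) 1) := by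
  have h := intervalIntegral.intervalIntegrable_rpow' (a := (0:ℝ)) (b := 1) (r := c - 1)
    (by linarith)
  rwa [intervalIntegrable_iff_integrableOn_Ioo_of_le (by norm_num)] at h

private lemma sub1 {β : ℝ} (hβ : 0 < β) {y : ℝ} (hy : y ∈ Set.Ioo (0:ℝ) 1) :
    ∫ x in Set.Ioo (0:ℝ) 1, x ^ (β - 1) * y ^ (β - 1) / (1 - x * (1 - y)) =
      ∫ u in Set.Ioo 0 y, u ^ (β - 1) * ((1 + u) * y - u)⁻¹ := by
  obtain ⟨hy0, hy1⟩ := hy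
  have himg : (fun u : ℝ => u / y) '' Set.Ioo 0 y = Set.Ioo 0 1 := by
    ext x
    constructor
    · rintro ⟨u, hu, rfl⟩
      exact ⟨div_pos hu.1 hy0, (div_lt_one hy0).2 hu.2⟩
    · rintro ⟨h0, h1⟩
      exact ⟨x * y, ⟨by positivity, by nlinarith⟩, by field_simp⟩
  have hderiv : ∀ u ∈ Set.Ioo (0:ℝ) y,
      HasDerivWithinAt (fun u : ℝ => u / y) (1 / y) (Set.Ioo 0 y) u := fun u _ =>
    ((hasDerivAt_id u).div_const y).hasDerivWithinAt
  have hinj : Set.InjOn (fun u : ℝ => u / y) (Set.Ioo 0 y) := fun a _ b _ h => by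
    field_simp at h; exact h
  rw [← himg, integral_image_eq_integral_abs_deriv_smul measurableSet_Ioo hderiv hinj]
  refine setIntegral_congr_fun measurableSet_Ioo fun u hu => ?_
  obtain ⟨hu0, huy⟩ := hu
  have hyne : y ≠ 0 := hy0.ne'
  have hden1 : (1 + u) * y - u > 0 := by nlinarith
  rw [smul_eq_mul, abs_of_pos (by positivity : (0:ℝ) < 1 / y), Real.div_rpow hu0.le hy0.le]
  have hyp : (0:ℝ) < y ^ (β - 1) := Real.rpow_pos_of_pos hy0 _
  rw [div_mul_cancel₀ _ hyp.ne']
  rw [show 1 - u / y * (1 - y) = ((1 + u) * y - u) / y by field_simp; ring]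
  rw [div_div_eq_mul_div]
  rw [← div_eq_mul_inv]
  field_simp [hden1.ne']

private lemma inner_y {u : ℝ} (hu0 : 0 < u) (hu1 : u < 1) :
    ∫ y in Set.Ioo u 1, ((1 + u) * y - u)⁻¹ = (1 + u)⁻¹ * (2 * (-Real.log u)) := by
  have hden : ∀ y ∈ Set.Icc u 1, 0 < (1 + u) * y - u := fun y hy => by nlinarith [hy.1, hy.2]
  rw [← integral_Ioc_eq_integral_Ioo, ← intervalIntegral.integral_of_le hu1.le]
  have hF : ∀ y ∈ Set.uIcc u 1, HasDerivAt (fun y : ℝ => (1 + u)⁻¹ * Real.log ((1 + u) * y - u))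
      (((1 + u) * y - u)⁻¹) y := by
    intro y hy
    rw [Set.uIcc_of_le hu1.le] at hy
    have h1 : HasDerivAt (fun y : ℝ => (1 + u) * y - u) (1 + u) y := by
      simpa using ((hasDerivAt_id y).const_mul (1 + u)).sub_const u
    have h3 := (h1.log (hden y hy).ne').const_mul (1 + u)⁻¹
    have hne : (1:ℝ) + u ≠ 0 := by linarith
    rw [show ((1 + u) * y - u)⁻¹ = (1 + u)⁻¹ * ((1 + u) / ((1 + u) * y - u)) by
      rw [← mul_div_assoc, inv_mul_cancel₀ hne, one_div]]
    convert h3 using 1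
  have hint : IntervalIntegrable (fun y : ℝ => ((1 + u) * y - u)⁻¹) volume u 1 := by
    apply ContinuousOn.intervalIntegrable
    apply ContinuousOn.inv₀ (by fun_prop)
    intro y hy
    rw [Set.uIcc_of_le hu1.le] at hy
    exact (hden y hy).ne'
  rw [intervalIntegral.integral_eq_sub_of_hasDerivAt hF hint]
  have e1 : (1 + u) * 1 - u = 1 := by ring
  have e2 : (1 + u) * u - u = u * u := by ring
  rw [e1, e2, Real.log_one, Real.log_mul hu0.ne' hu0.ne']
  ring

private lemma swap_lemma (G : ℝ → ℝ → ENNReal) (hG : Measurable (Function.uncurry G)) :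
    ∫⁻ y in Set.Ioo (0:ℝ) 1, ∫⁻ u in Set.Ioo 0 y, G u y =
      ∫⁻ u in Set.Ioo (0:ℝ) 1, ∫⁻ y in Set.Ioo u 1, G u y := by
  set K : ℝ × ℝ → ENNReal := fun p => if p.1 < p.2 then G p.1 p.2 else 0 with hK
  have hKm : Measurable K := Measurable.ite (measurableSet_lt measurable_fst measurable_snd) hG
    measurable_const
  have h1 : ∀ y ∈ Set.Ioo (0:ℝ) 1, ∫⁻ u in Set.Ioo 0 y, G u y =
      ∫⁻ u in Set.Ioo (0:ℝ) 1, K (u, y) := by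
    intro y hy
    have : ∀ u : ℝ, K (u, y) = Set.indicator (Set.Iio y) (fun u => G u y) u := by
      intro u
      simp only [hK, Set.indicator_apply, Set.mem_Iio]
    simp_rw [this]
    rw [lintegral_indicator measurableSet_Iio, Measure.restrict_restrict measurableSet_Iio]
    congr 1
    rw [show Set.Iio y ∩ Set.Ioo 0 1 = Set.Ioo 0 y from by
      ext z; simp only [Set.mem_inter_iff, Set.mem_Iio, Set.mem_Ioo]
      constructor
      · rintro ⟨h1, h2, h3⟩; exact ⟨h2, h1⟩
      · rintro ⟨h1, h2⟩; exact ⟨h2, h1, h2.trans hy.2⟩]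
  have h2 : ∀ u ∈ Set.Ioo (0:ℝ) 1, ∫⁻ y in Set.Ioo (0:ℝ) 1, K (u, y) =
      ∫⁻ y in Set.Ioo u 1, G u y := by
    intro u hu
    have : ∀ y : ℝ, K (u, y) = Set.indicator (Set.Ioi u) (fun y => G u y) y := by
      intro y
      simp only [hK, Set.indicator_apply, Set.mem_Ioi]
    simp_rw [this]
    rw [lintegral_indicator measurableSet_Ioi, Measure.restrict_restrict measurableSet_Ioi]
    congr 1
    rw [show Set.Ioi u ∩ Set.Ioo 0 1 = Set.Ioo u 1 from by
      ext z; simp only [Set.mem_inter_iff, Set.mem_Ioi, Set.mem_Ioo]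
      constructor
      · rintro ⟨h1, h2, h3⟩; exact ⟨h1, h3⟩
      · rintro ⟨h1, h2⟩; exact ⟨h1, hu.1.trans h1, h2⟩]
  rw [setLIntegral_congr_fun measurableSet_Ioo h1]
  rw [← setLIntegral_congr_fun measurableSet_Ioo h2]
  rw [← lintegral_prod_symm K hKm.aemeasurable, lintegral_prod K hKm.aemeasurable]

private lemma I1 {β : ℝ} (hβ : 0 < β) {y : ℝ} (hy : y ∈ Set.Ioo (0:ℝ) 1) :
    IntegrableOn (fun x : ℝ => x ^ (β - 1) * y ^ (β - 1) / (1 - x * (1 - y)))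
      (Set.Ioo (0:ℝ) 1) := by
  obtain ⟨hy0, hy1⟩ := hy
  apply Integrable.mono' (((L1 hβ).mul_const (y ^ (β - 1) / y)))
  · exact (Measurable.aestronglyMeasurable (by fun_prop))
  · filter_upwards [self_mem_ae_restrict measurableSet_Ioo] with x hx
    obtain ⟨hx0, hx1⟩ := hx
    have hden : y < 1 - x * (1 - y) := by nlinarith
    have hdpos : (0:ℝ) < 1 - x * (1 - y) := hy0.trans hden
    have hxp : (0:ℝ) < x ^ (β - 1) := Real.rpow_pos_of_pos hx0 _
    have hyp : (0:ℝ) < y ^ (β - 1) := Real.rpow_pos_of_pos hy0 _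
    rw [Real.norm_eq_abs, abs_of_nonneg (by positivity), div_le_iff₀ hdpos]
    calc x ^ (β - 1) * y ^ (β - 1) = x ^ (β - 1) * (y ^ (β - 1) / y) * y := by
          field_simp
      _ ≤ x ^ (β - 1) * (y ^ (β - 1) / y) * (1 - x * (1 - y)) :=
          mul_le_mul_of_nonneg_left hden.le (by positivity)

private lemma I2 {β : ℝ} (hβ : 0 < β) {y : ℝ} (hy : y ∈ Set.Ioo (0:ℝ) 1) :
    IntegrableOn (fun u : ℝ => u ^ (β - 1) * ((1 + u) * y - u)⁻¹) (Set.Ioo 0 y) := by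
  obtain ⟨hy0, hy1⟩ := hy
  apply Integrable.mono' (((L1 hβ).mono_set (Set.Ioo_subset_Ioo le_rfl hy1.le)).mul_const
    ((y * y)⁻¹))
  · exact (Measurable.aestronglyMeasurable (by fun_prop))
  · filter_upwards [self_mem_ae_restrict measurableSet_Ioo] with u hu
    obtain ⟨hu0, huy⟩ := hu
    have hden : y * y < (1 + u) * y - u := by nlinarith
    have hdpos : (0:ℝ) < (1 + u) * y - u := (by positivity : (0:ℝ) < y * y).trans hden
    have hup : (0:ℝ) < u ^ (β - 1) := Real.rpow_pos_of_pos hu0 _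
    rw [Real.norm_eq_abs, abs_of_nonneg (by positivity)]
    calc u ^ (β - 1) * ((1 + u) * y - u)⁻¹
        ≤ u ^ (β - 1) * (y * y)⁻¹ :=
          mul_le_mul_of_nonneg_left (by
            exact inv_anti₀ (by positivity) hden.le) (by positivity)
      _ = u ^ (β - 1) * (y * y)⁻¹ := rfl

private lemma I3 {β : ℝ} {u : ℝ} (hu0 : 0 < u) (hu1 : u < 1) :
    IntegrableOn (fun y : ℝ => u ^ (β - 1) * ((1 + u) * y - u)⁻¹) (Set.Ioo u 1) := by
  apply IntegrableOn.mono_set _ Set.Ioo_subset_Icc_self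
  apply ContinuousOn.integrableOn_Icc
  apply ContinuousOn.mul continuousOn_const
  apply ContinuousOn.inv₀ (by fun_prop)
  intro y hy
  have : 0 < (1 + u) * y - u := by nlinarith [hy.1, hy.2]
  exact this.ne'

private lemma term_eq {β : ℝ} (k : ℕ) {u : ℝ} (hu0 : 0 < u) :
    2 * (-Real.log u) * u ^ (β - 1) * (1 - u) * (u ^ 2) ^ k
      = 2 * (u ^ (2 * (k:ℝ) + β - 1) * (-Real.log u))
        - 2 * (u ^ (2 * (k:ℝ) + β + 1 - 1) * (-Real.log u)) := by
  have e1 : (u ^ 2) ^ k * u ^ (β - 1) = u ^ (2 * (k:ℝ) + β - 1) := by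
    rw [← pow_mul, ← Real.rpow_natCast u (2 * k), ← Real.rpow_add hu0]
    push_cast
    ring_nf
  have e2 : u ^ (2 * (k:ℝ) + β - 1) * u = u ^ (2 * (k:ℝ) + β + 1 - 1) := by
    rw [show 2 * (k:ℝ) + β + 1 - 1 = (2 * (k:ℝ) + β - 1) + 1 by ring,
      Real.rpow_add_one hu0.ne']
  calc 2 * (-Real.log u) * u ^ (β - 1) * (1 - u) * (u ^ 2) ^ k
      = 2 * (-Real.log u) * ((u ^ 2) ^ k * u ^ (β - 1))
        - 2 * (-Real.log u) * (((u ^ 2) ^ k * u ^ (β - 1)) * u) := by ring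
    _ = _ := by rw [e1, e2]; ring

private lemma term_integrable {β : ℝ} (hβ : 0 < β) (k : ℕ) :
    IntegrableOn (fun u : ℝ => 2 * (-Real.log u) * u ^ (β - 1) * (1 - u) * (u ^ 2) ^ k)
      (Set.Ioo (0:ℝ) 1) := by
  have h1 : (0:ℝ) < 2 * (k:ℝ) + β := by positivity
  have h2 : (0:ℝ) < 2 * (k:ℝ) + β + 1 := by positivity
  apply IntegrableOn.congr_fun _ (fun u hu => (term_eq k hu.1).symm) measurableSet_Ioo
  exact (((key_log_integrable h1).const_mul 2).sub ((key_log_integrable h2).const_mul 2))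

private lemma term_integral {β : ℝ} (hβ : 0 < β) (k : ℕ) :
    ∫ u in Set.Ioo (0:ℝ) 1, 2 * (-Real.log u) * u ^ (β - 1) * (1 - u) * (u ^ 2) ^ k
      = 2 * (1 / (2 * (k:ℝ) + β) ^ 2) - 2 * (1 / (2 * (k:ℝ) + β + 1) ^ 2) := by
  have h1 : (0:ℝ) < 2 * (k:ℝ) + β := by positivity
  have h2 : (0:ℝ) < 2 * (k:ℝ) + β + 1 := by positivity
  rw [setIntegral_congr_fun measurableSet_Ioo (fun u hu => term_eq k hu.1)]
  rw [integral_sub ((key_log_integrable h1).const_mul 2) ((key_log_integrable h2).const_mul 2)]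
  rw [integral_const_mul, integral_const_mul, key_log_integral h1, key_log_integral h2]

private lemma base_summable {δ : ℝ} (hδ : 0 < δ) :
    Summable (fun k : ℕ => 1 / (2 * (k:ℝ) + δ) ^ 2) := by
  have hm : 0 < min δ 1 := lt_min hδ one_pos
  have hbase : Summable (fun k : ℕ => 1 / ((k:ℝ) + 1) ^ 2) := by
    have h0 : Summable (fun n : ℕ => 1 / (n:ℝ) ^ 2) :=
      Real.summable_one_div_nat_pow.mpr one_lt_two
    have h1 := (summable_nat_add_iff 1).mpr h0
    apply h1.congr
    intro n
    push_cast
    ring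
  apply Summable.of_nonneg_of_le (fun k => by positivity)
    (fun k => ?_) (hbase.mul_left ((min δ 1)⁻¹ ^ 2))
  have hk : min δ 1 * ((k:ℝ) + 1) ≤ 2 * (k:ℝ) + δ := by
    have h1 : min δ 1 ≤ δ := min_le_left _ _
    have h2 : min δ 1 ≤ 1 := min_le_right _ _
    nlinarith [Nat.cast_nonneg (α := ℝ) k]
  have hstep : (2 * (k:ℝ) + δ)⁻¹ ≤ (min δ 1 * ((k:ℝ) + 1))⁻¹ :=
    inv_anti₀ (by positivity) hk
  calc 1 / (2 * (k:ℝ) + δ) ^ 2 = ((2 * (k:ℝ) + δ)⁻¹) ^ 2 := by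
        rw [one_div, inv_pow]
    _ ≤ ((min δ 1 * ((k:ℝ) + 1))⁻¹) ^ 2 := pow_le_pow_left₀ (by positivity) hstep 2
    _ = (min δ 1)⁻¹ ^ 2 * (1 / ((k:ℝ) + 1) ^ 2) := by
        rw [mul_inv, mul_pow, one_div, inv_pow, inv_pow]

private lemma geom_eq {β u : ℝ} (hu0 : 0 < u) (hu1 : u < 1) :
    ∑' k : ℕ, 2 * (-Real.log u) * u ^ (β - 1) * (1 - u) * (u ^ 2) ^ k
      = u ^ (β - 1) * ((1 + u)⁻¹ * (2 * (-Real.log u))) := by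
  have hsq0 : (0:ℝ) ≤ u ^ 2 := sq_nonneg u
  have hsq1 : u ^ 2 < 1 := by nlinarith
  rw [tsum_mul_left, tsum_geometric_of_lt_one hsq0 hsq1]
  have h1 : 1 - u ^ 2 = (1 - u) * (1 + u) := by ring
  have h2 : (1:ℝ) - u ≠ 0 := by nlinarith
  have h3 : (1:ℝ) + u ≠ 0 := by nlinarith
  rw [h1, mul_inv]
  field_simp

private lemma summable_terms {β u : ℝ} (hu0 : 0 < u) (hu1 : u < 1) :
    Summable (fun k : ℕ => 2 * (-Real.log u) * u ^ (β - 1) * (1 - u) * (u ^ 2) ^ k) :=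
  (summable_geometric_of_lt_one (sq_nonneg u) (by nlinarith)).mul_left _

private lemma term_nonneg {β u : ℝ} (hu0 : 0 < u) (hu1 : u < 1) (k : ℕ) :
    0 ≤ 2 * (-Real.log u) * u ^ (β - 1) * (1 - u) * (u ^ 2) ^ k := by
  have hl : Real.log u ≤ 0 := Real.log_nonpos hu0.le hu1.le
  have h1 : (0:ℝ) ≤ -Real.log u := by linarith
  have h2 : (0:ℝ) ≤ u ^ (β - 1) := Real.rpow_nonneg hu0.le _
  have h3 : (0:ℝ) ≤ 1 - u := by linarith
  positivity

private lemma d_nonneg {β : ℝ} (hβ : 0 < β) (k : ℕ) :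
    0 ≤ 2 * (1 / (2 * (k:ℝ) + β) ^ 2) - 2 * (1 / (2 * (k:ℝ) + β + 1) ^ 2) := by
  have h1 : (0:ℝ) < 2 * (k:ℝ) + β := by positivity
  have h2 : (2 * (k:ℝ) + β) ^ 2 ≤ (2 * (k:ℝ) + β + 1) ^ 2 := by nlinarith
  have h3 : 1 / (2 * (k:ℝ) + β + 1) ^ 2 ≤ 1 / (2 * (k:ℝ) + β) ^ 2 :=
    one_div_le_one_div_of_le (by positivity) h2
  linarith

private lemma d_summable {β : ℝ} (hβ : 0 < β) :
    Summable (fun k : ℕ => 2 * (1 / (2 * (k:ℝ) + β) ^ 2)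
      - 2 * (1 / (2 * (k:ℝ) + β + 1) ^ 2)) := by
  have So : Summable (fun k : ℕ => 1 / (2 * (k:ℝ) + β + 1) ^ 2) := by
    apply (base_summable (by linarith : (0:ℝ) < β + 1)).congr
    intro k; ring_nf
  exact ((base_summable hβ).mul_left 2).sub (So.mul_left 2)

private lemma sum_id {β : ℝ} (hβ : 0 < β) :
    ∑' k : ℕ, (2 * (1 / (2 * (k:ℝ) + β) ^ 2) - 2 * (1 / (2 * (k:ℝ) + β + 1) ^ 2))
      = 2 * ∑' ν : ℕ, (-1:ℝ) ^ ν / ((ν:ℝ) + β) ^ 2 := by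
  set a : ℕ → ℝ := fun ν => (-1:ℝ) ^ ν / ((ν:ℝ) + β) ^ 2 with ha
  have Se : Summable (fun k : ℕ => 1 / (2 * (k:ℝ) + β) ^ 2) := base_summable hβ
  have So : Summable (fun k : ℕ => 1 / (2 * (k:ℝ) + β + 1) ^ 2) := by
    apply (base_summable (by linarith : (0:ℝ) < β + 1)).congr
    intro k; ring_nf
  have hae : ∀ k : ℕ, a (2 * k) = 1 / (2 * (k:ℝ) + β) ^ 2 := by
    intro k
    simp only [ha]
    rw [pow_mul, neg_one_sq, one_pow]
    push_cast
    ring_nf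
  have hao : ∀ k : ℕ, a (2 * k + 1) = -(1 / (2 * (k:ℝ) + β + 1) ^ 2) := by
    intro k
    simp only [ha]
    rw [pow_succ, pow_mul, neg_one_sq, one_pow, one_mul]
    push_cast
    ring_nf
  have he : Summable (fun k : ℕ => a (2 * k)) := Se.congr (fun k => (hae k).symm)
  have ho : Summable (fun k : ℕ => a (2 * k + 1)) := So.neg.congr (fun k => (hao k).symm)
  have key := tsum_even_add_odd he ho
  have e1 : ∑' k : ℕ, a (2 * k) = ∑' k : ℕ, 1 / (2 * (k:ℝ) + β) ^ 2 := tsum_congr hae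
  have e2 : ∑' k : ℕ, a (2 * k + 1) = -∑' k : ℕ, 1 / (2 * (k:ℝ) + β + 1) ^ 2 := by
    rw [tsum_congr hao, tsum_neg]
  rw [Summable.tsum_sub (Se.mul_left 2) (So.mul_left 2), tsum_mul_left, tsum_mul_left]
  rw [e1, e2] at key
  rw [← key]
  ring

open MeasureTheory in
/-- For real `α < 1`,
`∬_{[0,1]²} x^{-α} y^{-α}/(1-x(1-y)) dx dy = 2 Z₂⁻(α) = 2 Σ_{ν≥1} (-1)^{ν-1}/(ν-α)²`. -/
theorem stmt7 (α : ℝ) (hα : α < 1) :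
    (∫ p in Set.Ioo (0 : ℝ) 1 ×ˢ Set.Ioo (0 : ℝ) 1,
        p.1 ^ (-α) * p.2 ^ (-α) / (1 - p.1 * (1 - p.2))) =
      2 * ∑' ν : ℕ, (-1 : ℝ) ^ ν / (((ν : ℝ) + 1) - α) ^ 2 := by
  obtain ⟨β, hβdef, hβ⟩ : ∃ β : ℝ, β = 1 - α ∧ 0 < β := ⟨1 - α, rfl, by linarith⟩
  have hexp : -α = β - 1 := by rw [hβdef]; ring
  have hIoo : MeasurableSet (Set.Ioo (0:ℝ) 1) := measurableSet_Ioo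
  simp only [hexp]
  rw [show (∑' ν : ℕ, (-1:ℝ) ^ ν / (((ν:ℝ) + 1) - α) ^ 2)
      = ∑' ν : ℕ, (-1:ℝ) ^ ν / ((ν:ℝ) + β) ^ 2 from
    tsum_congr fun ν => by rw [hβdef]; ring_nf]
  have hFm : Measurable
      (fun p : ℝ × ℝ => p.1 ^ (β - 1) * p.2 ^ (β - 1) / (1 - p.1 * (1 - p.2))) := by fun_prop
  have h0 : (∫ p in Set.Ioo (0:ℝ) 1 ×ˢ Set.Ioo (0:ℝ) 1,
        p.1 ^ (β - 1) * p.2 ^ (β - 1) / (1 - p.1 * (1 - p.2)))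
      = (∫⁻ p in Set.Ioo (0:ℝ) 1 ×ˢ Set.Ioo (0:ℝ) 1,
          ENNReal.ofReal (p.1 ^ (β - 1) * p.2 ^ (β - 1) / (1 - p.1 * (1 - p.2)))).toReal := by
    rw [integral_eq_lintegral_of_nonneg_ae]
    · filter_upwards [self_mem_ae_restrict (hIoo.prod hIoo)] with p hp
      obtain ⟨⟨hx0, hx1⟩, ⟨hy0, hy1⟩⟩ := hp
      have hden : (0:ℝ) < 1 - p.1 * (1 - p.2) := by nlinarith
      simp only [Pi.zero_apply]
      exact div_nonneg (by positivity) hden.le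
    · exact hFm.aestronglyMeasurable
  have h1 : (∫⁻ p in Set.Ioo (0:ℝ) 1 ×ˢ Set.Ioo (0:ℝ) 1,
          ENNReal.ofReal (p.1 ^ (β - 1) * p.2 ^ (β - 1) / (1 - p.1 * (1 - p.2))))
      = ∫⁻ y in Set.Ioo (0:ℝ) 1, ∫⁻ x in Set.Ioo (0:ℝ) 1,
          ENNReal.ofReal (x ^ (β - 1) * y ^ (β - 1) / (1 - x * (1 - y))) := by
    rw [Measure.volume_eq_prod, ← Measure.prod_restrict]
    exact lintegral_prod_symm _ hFm.ennreal_ofReal.aemeasurable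
  have h2 : (∫⁻ y in Set.Ioo (0:ℝ) 1, ∫⁻ x in Set.Ioo (0:ℝ) 1,
          ENNReal.ofReal (x ^ (β - 1) * y ^ (β - 1) / (1 - x * (1 - y))))
      = ∫⁻ y in Set.Ioo (0:ℝ) 1, ∫⁻ u in Set.Ioo 0 y,
          ENNReal.ofReal (u ^ (β - 1) * ((1 + u) * y - u)⁻¹) := by
    apply setLIntegral_congr_fun hIoo
    intro y hy
    dsimp only
    obtain ⟨hy0, hy1⟩ := hy
    have nn1 : 0 ≤ᵐ[volume.restrict (Set.Ioo (0:ℝ) 1)]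
        fun x : ℝ => x ^ (β - 1) * y ^ (β - 1) / (1 - x * (1 - y)) := by
      filter_upwards [self_mem_ae_restrict hIoo] with x hx
      obtain ⟨hx0, hx1⟩ := hx
      have hden : (0:ℝ) < 1 - x * (1 - y) := by nlinarith
      simp only [Pi.zero_apply]
      exact div_nonneg (by positivity) hden.le
    have nn2 : 0 ≤ᵐ[volume.restrict (Set.Ioo 0 y)]
        fun u : ℝ => u ^ (β - 1) * ((1 + u) * y - u)⁻¹ := by
      filter_upwards [self_mem_ae_restrict measurableSet_Ioo] with u hu
      obtain ⟨hu0, huy⟩ := hu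
      have hden : (0:ℝ) < (1 + u) * y - u := by nlinarith
      simp only [Pi.zero_apply]
      positivity
    rw [← ofReal_integral_eq_lintegral_ofReal (I1 hβ ⟨hy0, hy1⟩) nn1, sub1 hβ ⟨hy0, hy1⟩,
      ofReal_integral_eq_lintegral_ofReal (I2 hβ ⟨hy0, hy1⟩) nn2]
  have h3 : (∫⁻ y in Set.Ioo (0:ℝ) 1, ∫⁻ u in Set.Ioo 0 y,
          ENNReal.ofReal (u ^ (β - 1) * ((1 + u) * y - u)⁻¹))
      = ∫⁻ u in Set.Ioo (0:ℝ) 1, ∫⁻ y in Set.Ioo u 1,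
          ENNReal.ofReal (u ^ (β - 1) * ((1 + u) * y - u)⁻¹) :=
    swap_lemma (fun u y => ENNReal.ofReal (u ^ (β - 1) * ((1 + u) * y - u)⁻¹))
      (Measurable.ennreal_ofReal (by fun_prop))
  have h4 : (∫⁻ u in Set.Ioo (0:ℝ) 1, ∫⁻ y in Set.Ioo u 1,
          ENNReal.ofReal (u ^ (β - 1) * ((1 + u) * y - u)⁻¹))
      = ∫⁻ u in Set.Ioo (0:ℝ) 1,
          ENNReal.ofReal (u ^ (β - 1) * ((1 + u)⁻¹ * (2 * (-Real.log u)))) := by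
    apply setLIntegral_congr_fun hIoo
    intro u hu
    dsimp only
    obtain ⟨hu0, hu1⟩ := hu
    have nn : 0 ≤ᵐ[volume.restrict (Set.Ioo u 1)]
        fun y : ℝ => u ^ (β - 1) * ((1 + u) * y - u)⁻¹ := by
      filter_upwards [self_mem_ae_restrict measurableSet_Ioo] with y hy
      have hden : (0:ℝ) < (1 + u) * y - u := by nlinarith [hy.1, hy.2]
      simp only [Pi.zero_apply]
      positivity
    rw [← ofReal_integral_eq_lintegral_ofReal (I3 (β := β) hu0 hu1) nn]
    rw [integral_const_mul, inner_y hu0 hu1]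
  have h5 : (∫⁻ u in Set.Ioo (0:ℝ) 1,
          ENNReal.ofReal (u ^ (β - 1) * ((1 + u)⁻¹ * (2 * (-Real.log u)))))
      = ∫⁻ u in Set.Ioo (0:ℝ) 1, ∑' k : ℕ,
          ENNReal.ofReal (2 * (-Real.log u) * u ^ (β - 1) * (1 - u) * (u ^ 2) ^ k) := by
    apply setLIntegral_congr_fun hIoo
    intro u hu
    dsimp only
    obtain ⟨hu0, hu1⟩ := hu
    rw [← geom_eq (β := β) hu0 hu1]
    exact ENNReal.ofReal_tsum_of_nonneg (term_nonneg hu0 hu1) (summable_terms hu0 hu1)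
  have h6 : (∫⁻ u in Set.Ioo (0:ℝ) 1, ∑' k : ℕ,
          ENNReal.ofReal (2 * (-Real.log u) * u ^ (β - 1) * (1 - u) * (u ^ 2) ^ k))
      = ∑' k : ℕ, ∫⁻ u in Set.Ioo (0:ℝ) 1,
          ENNReal.ofReal (2 * (-Real.log u) * u ^ (β - 1) * (1 - u) * (u ^ 2) ^ k) :=
    lintegral_tsum (fun k => (Measurable.ennreal_ofReal
      ((((measurable_const.mul Real.measurable_log.neg).mul (by fun_prop)).mul
        (by fun_prop)).mul (by fun_prop))).aemeasurable)
  have h7 : ∀ k : ℕ, (∫⁻ u in Set.Ioo (0:ℝ) 1,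
          ENNReal.ofReal (2 * (-Real.log u) * u ^ (β - 1) * (1 - u) * (u ^ 2) ^ k))
      = ENNReal.ofReal (2 * (1 / (2 * (k:ℝ) + β) ^ 2) - 2 * (1 / (2 * (k:ℝ) + β + 1) ^ 2)) := by
    intro k
    have nn : 0 ≤ᵐ[volume.restrict (Set.Ioo (0:ℝ) 1)]
        fun u : ℝ => 2 * (-Real.log u) * u ^ (β - 1) * (1 - u) * (u ^ 2) ^ k := by
      filter_upwards [self_mem_ae_restrict hIoo] with u hu
      simpa using term_nonneg (β := β) hu.1 hu.2 k
    rw [← ofReal_integral_eq_lintegral_ofReal (term_integrable hβ k) nn, term_integral hβ k]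
  have h8 : (∑' k : ℕ, ENNReal.ofReal
        (2 * (1 / (2 * (k:ℝ) + β) ^ 2) - 2 * (1 / (2 * (k:ℝ) + β + 1) ^ 2)))
      = ENNReal.ofReal (∑' k : ℕ,
        (2 * (1 / (2 * (k:ℝ) + β) ^ 2) - 2 * (1 / (2 * (k:ℝ) + β + 1) ^ 2))) :=
    (ENNReal.ofReal_tsum_of_nonneg (d_nonneg hβ) (d_summable hβ)).symm
  rw [h0, h1, h2, h3, h4, h5, h6]
  rw [tsum_congr h7, h8, ENNReal.toReal_ofReal (tsum_nonneg (d_nonneg hβ))]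
  exact sum_id hβ
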